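/- arXiv:2501.18732 — 6 statements merged into one kernel-verified Lean document; each statement's English description precedes it below -/
import Mathlib

section
/- Let C : K → S → ℝ and W : K → S → ℝ satisfy C k s ≥ 0 and W k s ≥ 0 for all k, s. Let (x*, p*) be feasible for DA(C,W). Suppose (x̂, q̂) ∈ (Fin n → ℝ) × (K → ℝ) satisfies (x̂, q̂) ∈ Y, 0 ≤ q̂ k ≤ Σ_{s∈S} p* k s for all k ∈ K, and f0(x̂) < f0(x*). Then there exists p̂ : K → S → ℝ such that (x̂, p̂) is feasible for DA(C,W) and f0(x̂) + Σ_{k∈K} Σ_{s∈S} C k s * p̂ k s < f0(x*) + Σ_{k∈K} Σ_{s∈S} C k s * p* k s, i.e., (x̂, p̂) strictly improves on (x*, p*) in the priced day-ahead problem. -/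
open Finset

/-- Feasibility for the priced day-ahead problem DA(C,W): the non-VRE decision `x`
together with the aggregate VRE dispatch lies in `Y`, and each segment dispatch
lies between `0` and the bid quantity `W k s`. -/
def DAFeasible {n : ℕ} {K S : Type*} [Fintype S]
    (Y : Set ((Fin n → ℝ) × (K → ℝ)))
    (W : K → S → ℝ) (x : Fin n → ℝ) (p : K → S → ℝ) : Prop :=
  ((x, fun k => ∑ s, p k s) ∈ Y) ∧ ∀ k s, 0 ≤ p k s ∧ p k s ≤ W k s

/-- Optimality for the priced day-ahead problem DA(C,W): feasible and minimizing
`f0 x + Σ_k Σ_s C k s * p k s` over all feasible pairs. -/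
def DAOptimal {n : ℕ} {K S : Type*} [Fintype K] [Fintype S]
    (Y : Set ((Fin n → ℝ) × (K → ℝ))) (f0 : (Fin n → ℝ) → ℝ)
    (C W : K → S → ℝ) (x : Fin n → ℝ) (p : K → S → ℝ) : Prop :=
  DAFeasible Y W x p ∧
    ∀ x' p', DAFeasible Y W x' p' →
      f0 x + ∑ k, ∑ s, C k s * p k s ≤ f0 x' + ∑ k, ∑ s, C k s * p' k s

/-- Feasibility for the quantity-only day-ahead problem DA0(W'). -/
def DA0Feasible {n : ℕ} {K : Type*}
    (Y : Set ((Fin n → ℝ) × (K → ℝ)))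
    (W' : K → ℝ) (x : Fin n → ℝ) (q : K → ℝ) : Prop :=
  ((x, q) ∈ Y) ∧ ∀ k, 0 ≤ q k ∧ q k ≤ W' k

/-- Optimality for the quantity-only day-ahead problem DA0(W'): feasible and
minimizing `f0 x` over all feasible pairs. -/
def DA0Optimal {n : ℕ} {K : Type*}
    (Y : Set ((Fin n → ℝ) × (K → ℝ))) (f0 : (Fin n → ℝ) → ℝ)
    (W' : K → ℝ) (x : Fin n → ℝ) (q : K → ℝ) : Prop :=
  DA0Feasible Y W' x q ∧ ∀ x' q', DA0Feasible Y W' x' q' → f0 x ≤ f0 x'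

/-- Contradiction step in the proof of Theorem 1: if `(x*, p*)` is feasible for
DA(C,W) with nonnegative prices and quantities, and `(x̂, q̂) ∈ Y` has aggregate
dispatch within the aggregate of `p*` and strictly smaller true cost, then some
`(x̂, p̂)` is feasible for DA(C,W) and strictly improves the priced objective. -/
theorem strict_improvement {n : ℕ} {K S : Type*} [Fintype K] [Fintype S] [Nonempty S]
    (Y : Set ((Fin n → ℝ) × (K → ℝ))) (f0 : (Fin n → ℝ) → ℝ)
    (C W : K → S → ℝ) (hC : ∀ k s, 0 ≤ C k s) (hW : ∀ k s, 0 ≤ W k s)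
    (xs : Fin n → ℝ) (ps : K → S → ℝ) (hfeas : DAFeasible Y W xs ps)
    (xh : Fin n → ℝ) (qh : K → ℝ)
    (hmem : (xh, qh) ∈ Y) (hqh : ∀ k, 0 ≤ qh k ∧ qh k ≤ ∑ s, ps k s)
    (hlt : f0 xh < f0 xs) :
    ∃ ph : K → S → ℝ, DAFeasible Y W xh ph ∧
      f0 xh + ∑ k, ∑ s, C k s * ph k s < f0 xs + ∑ k, ∑ s, C k s * ps k s := by
  classical
  set ph : K → S → ℝ := fun k s =>
    if ∑ t, ps k t = 0 then 0 else (qh k / ∑ t, ps k t) * ps k s with hph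
  have hps0 : ∀ k s, 0 ≤ ps k s := fun k s => (hfeas.2 k s).1
  have hsum0 : ∀ k, 0 ≤ ∑ t, ps k t := fun k => Finset.sum_nonneg fun t _ => hps0 k t
  have hratio : ∀ k, ¬ (∑ t, ps k t = 0) → 0 ≤ qh k / ∑ t, ps k t ∧ qh k / ∑ t, ps k t ≤ 1 := by
    intro k hk
    have hpos : 0 < ∑ t, ps k t := lt_of_le_of_ne (hsum0 k) (Ne.symm hk)
    constructor
    · exact div_nonneg (hqh k).1 hpos.le
    · exact div_le_one_of_le₀ (hqh k).2 hpos.le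
  have hle : ∀ k s, 0 ≤ ph k s ∧ ph k s ≤ ps k s := by
    intro k s
    simp only [hph]
    split_ifs with h
    · exact ⟨le_rfl, hps0 k s⟩
    · obtain ⟨h1, h2⟩ := hratio k h
      constructor
      · exact mul_nonneg h1 (hps0 k s)
      · nlinarith [hps0 k s]
  have hsum : ∀ k, ∑ s, ph k s = qh k := by
    intro k
    simp only [hph]
    split_ifs with h
    · have := (hqh k).2
      rw [h] at this
      simp [le_antisymm this (hqh k).1]
    · rw [← Finset.mul_sum, div_mul_cancel₀ _ h]
  refine ⟨ph, ⟨⟨?_, fun k s => ⟨(hle k s).1, (hle k s).2.trans (hfeas.2 k s).2⟩⟩, ?_⟩⟩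
  · have : (fun k => ∑ s, ph k s) = qh := funext hsum
    rw [this]; exact hmem
  · have hcost : ∑ k, ∑ s, C k s * ph k s ≤ ∑ k, ∑ s, C k s * ps k s := by
      apply Finset.sum_le_sum; intro k _
      apply Finset.sum_le_sum; intro s _
      exact mul_le_mul_of_nonneg_left (hle k s).2 (hC k s)
    linarith
end

section
/- Let C : K → S → ℝ and W : K → S → ℝ satisfy C k s ≥ 0 and W k s ≥ 0 for all k, s, and let (x*, p*) be optimal for the priced day-ahead problem DA(C,W). Define the aggregate q* : K → ℝ by q* k := Σ_{s∈S} p* k s. Then (x*, q*) is optimal for the quantity-only problem DA0(q*), i.e., (x*, q*) is feasible for DA0(q*) and f0(x*) ≤ f0(x) for every (x, q) feasible for DA0(q*). -/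
open Finset

/-- Key lemma in the proof of Theorem 1: the day-ahead schedule optimal under any
nonnegative multi-segment bidding curve remains optimal for the zero-price
single-quantity problem whose capacity equals its own aggregate VRE dispatch. -/
theorem priced_optimal_is_quantity_optimal {n : ℕ} {K S : Type*}
    [Fintype K] [Fintype S] [Nonempty S]
    (Y : Set ((Fin n → ℝ) × (K → ℝ))) (f0 : (Fin n → ℝ) → ℝ)
    (C W : K → S → ℝ) (hC : ∀ k s, 0 ≤ C k s) (hW : ∀ k s, 0 ≤ W k s)
    (xs : Fin n → ℝ) (ps : K → S → ℝ) (hopt : DAOptimal Y f0 C W xs ps) :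
    DA0Optimal Y f0 (fun k => ∑ s, ps k s) xs (fun k => ∑ s, ps k s) := by
  obtain ⟨⟨hY, hbd⟩, hmin⟩ := hopt
  have hps0 : ∀ k s, 0 ≤ ps k s := fun k s => (hbd k s).1
  refine ⟨⟨hY, fun k => ⟨Finset.sum_nonneg fun s _ => hps0 k s, le_refl _⟩⟩, ?_⟩
  intro x' q' ⟨hY', hq'⟩
  -- scale factor per k
  set t : K → ℝ := fun k => if h : (∑ s, ps k s) = 0 then 0 else q' k / (∑ s, ps k s)
  have ht01 : ∀ k, 0 ≤ t k ∧ t k ≤ 1 := by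
    intro k
    simp only [t]
    split_ifs with h
    · exact ⟨le_refl 0, zero_le_one⟩
    · have hpos : 0 < ∑ s, ps k s :=
        lt_of_le_of_ne (Finset.sum_nonneg fun s _ => hps0 k s) (Ne.symm h)
      constructor
      · exact div_nonneg (hq' k).1 hpos.le
      · rw [div_le_one hpos]; exact (hq' k).2
  set p' : K → S → ℝ := fun k s => t k * ps k s
  have hagg : ∀ k, (∑ s, p' k s) = q' k := by
    intro k
    simp only [p', ← Finset.mul_sum, t]
    split_ifs with h
    · have : q' k ≤ 0 := h ▸ (hq' k).2
      linarith [(hq' k).1]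
    · field_simp
  have hfeas : DAFeasible Y W x' p' := by
    refine ⟨?_, fun k s => ⟨mul_nonneg (ht01 k).1 (hps0 k s), ?_⟩⟩
    · have : (fun k => ∑ s, p' k s) = q' := funext hagg
      rw [this]; exact hY'
    · calc t k * ps k s ≤ 1 * ps k s :=
            mul_le_mul_of_nonneg_right (ht01 k).2 (hps0 k s)
        _ = ps k s := one_mul _
        _ ≤ W k s := (hbd k s).2
  have hcost : (∑ k, ∑ s, C k s * p' k s) ≤ ∑ k, ∑ s, C k s * ps k s := by
    refine Finset.sum_le_sum fun k _ => Finset.sum_le_sum fun s _ => ?_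
    have : C k s * p' k s = t k * (C k s * ps k s) := by ring
    rw [this]
    calc t k * (C k s * ps k s) ≤ 1 * (C k s * ps k s) :=
          mul_le_mul_of_nonneg_right (ht01 k).2 (mul_nonneg (hC k s) (hps0 k s))
      _ = C k s * ps k s := one_mul _
  have := hmin x' p' hfeas
  linarith
end

section
/- A ⊆ B: for every value v ∈ A (i.e., v = G(x*, fun k => Σ_{s∈S} p* k s) for some prices C ≥ 0, quantities W ≥ 0, and (x*, p*) optimal for DA(C,W)), there exist W' : K → ℝ with W' ≥ 0 and a pair (x, q) optimal for DA0(W') such that v = G(x, q). In other words, every expected system cost achievable by Problem BiD (multi-segment nonnegative-price bidding) is also achievable by Problem BiD-q (single-quantity zero-price bidding). -/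
open Finset

/-- A ⊆ B: every expected system cost achievable by Problem BiD (multi-segment
nonnegative-price bidding) is also achievable by Problem BiD-q (single-quantity
zero-price bidding). -/
theorem BiD_subset_BiDq {n : ℕ} {K S : Type*} [Fintype K] [Fintype S] [Nonempty S]
    (Y : Set ((Fin n → ℝ) × (K → ℝ))) (f0 : (Fin n → ℝ) → ℝ)
    (G : (Fin n → ℝ) × (K → ℝ) → ℝ) :
    {v : ℝ | ∃ (C W : K → S → ℝ) (x : Fin n → ℝ) (p : K → S → ℝ),
        (∀ k s, 0 ≤ C k s) ∧ (∀ k s, 0 ≤ W k s) ∧ DAOptimal Y f0 C W x p ∧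
        v = G (x, fun k => ∑ s, p k s)} ⊆
    {v : ℝ | ∃ (W' : K → ℝ) (x : Fin n → ℝ) (q : K → ℝ),
        (∀ k, 0 ≤ W' k) ∧ DA0Optimal Y f0 W' x q ∧ v = G (x, q)} := by
  rintro v ⟨C, W, x, p, hC, hW, ⟨⟨hmem, hbox⟩, hopt⟩, rfl⟩
  set W' : K → ℝ := fun k => ∑ s, p k s with hW'
  have hW'0 : ∀ k, 0 ≤ W' k := fun k => Finset.sum_nonneg fun s _ => (hbox k s).1
  refine ⟨W', x, fun k => ∑ s, p k s, hW'0, ⟨⟨hmem, fun k => ⟨hW'0 k, le_refl _⟩⟩, ?_⟩, rfl⟩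
  intro x' q' ⟨hmem', hq'⟩
  -- scale p to get a DA-feasible p' with row sums q'
  set t : K → ℝ := fun k => if W' k = 0 then 0 else q' k / W' k with ht
  have ht01 : ∀ k, 0 ≤ t k ∧ t k ≤ 1 := by
    intro k
    by_cases h : W' k = 0
    · simp [ht, h]
    · have hWpos : 0 < W' k := lt_of_le_of_ne (hW'0 k) (Ne.symm h)
      constructor
      · simp only [ht, h, if_false]
        exact div_nonneg (hq' k).1 (le_of_lt hWpos)
      · simp only [ht, h, if_false]
        exact (div_le_one hWpos).mpr (hq' k).2
  set p' : K → S → ℝ := fun k s => t k * p k s with hp'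
  have hsum : ∀ k, ∑ s, p' k s = q' k := by
    intro k
    by_cases h : W' k = 0
    · have hq0 : q' k = 0 := le_antisymm (h ▸ (hq' k).2) (hq' k).1
      simp [hp', ht, h, hq0]
    · have hWpos : 0 < W' k := lt_of_le_of_ne (hW'0 k) (Ne.symm h)
      simp only [hp', ht, h, if_false]
      rw [← Finset.mul_sum]
      field_simp [hW']
      rfl
  have hfeas : DAFeasible Y W x' p' := by
    constructor
    · have : (fun k => ∑ s, p' k s) = q' := funext hsum
      rw [this]; exact hmem'
    · intro k s
      constructor
      · exact mul_nonneg (ht01 k).1 (hbox k s).1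
      · calc t k * p k s ≤ 1 * p k s :=
              mul_le_mul_of_nonneg_right (ht01 k).2 (hbox k s).1
          _ = p k s := one_mul _
          _ ≤ W k s := (hbox k s).2
  have hkey := hopt x' p' hfeas
  have hle : ∑ k, ∑ s, C k s * p' k s ≤ ∑ k, ∑ s, C k s * p k s := by
    refine Finset.sum_le_sum fun k _ => Finset.sum_le_sum fun s _ => ?_
    refine mul_le_mul_of_nonneg_left ?_ (hC k s)
    calc t k * p k s ≤ 1 * p k s :=
          mul_le_mul_of_nonneg_right (ht01 k).2 (hbox k s).1
      _ = p k s := one_mul _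
  linarith
end

section
/- A = B: the set of expected system cost values achievable by Problem BiD (optimizing multi-segment bidding curves with nonnegative prices and nonnegative quantities) coincides with the set of expected system cost values achievable by Problem BiD-q (optimizing a single nonnegative bid quantity at zero bid price). -/
open Finset

/-- A = B: the set of expected system cost values achievable by Problem BiD
coincides with the set achievable by Problem BiD-q (strengthened Theorem 1). -/
theorem BiD_eq_BiDq {n : ℕ} {K S : Type*} [Fintype K] [Fintype S] [Nonempty S]
    (Y : Set ((Fin n → ℝ) × (K → ℝ))) (f0 : (Fin n → ℝ) → ℝ)
    (G : (Fin n → ℝ) × (K → ℝ) → ℝ) :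
    {v : ℝ | ∃ (C W : K → S → ℝ) (x : Fin n → ℝ) (p : K → S → ℝ),
        (∀ k s, 0 ≤ C k s) ∧ (∀ k s, 0 ≤ W k s) ∧ DAOptimal Y f0 C W x p ∧
        v = G (x, fun k => ∑ s, p k s)} =
    {v : ℝ | ∃ (W' : K → ℝ) (x : Fin n → ℝ) (q : K → ℝ),
        (∀ k, 0 ≤ W' k) ∧ DA0Optimal Y f0 W' x q ∧ v = G (x, q)} := by

  classical
  ext v
  simp only [Set.mem_setOf_eq]
  constructor
  · rintro ⟨C, W, x, p, hC, hW, ⟨⟨hY, hb⟩, hmin⟩, hv⟩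
    set q : K → ℝ := fun k => ∑ s, p k s with hq
    refine ⟨q, x, q, fun k => Finset.sum_nonneg fun s _ => (hb k s).1,
      ⟨⟨hY, fun k => ⟨Finset.sum_nonneg fun s _ => (hb k s).1, le_refl _⟩⟩, ?_⟩, hv⟩
    rintro x' q' ⟨hY', hb'⟩
    set p' : K → S → ℝ := fun k s => if q k = 0 then 0 else (q' k / q k) * p k s with hp'
    have hsum : ∀ k, ∑ s, p' k s = q' k := by
      intro k
      by_cases h : q k = 0
      · simp only [hp', h, if_true]
        have h1 : q' k ≤ 0 := h ▸ (hb' k).2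
        have h2 : 0 ≤ q' k := (hb' k).1
        simp [le_antisymm h1 h2]
      · simp only [hp', h, if_false, ← Finset.mul_sum]
        exact div_mul_cancel₀ _ h
    have hqpos : ∀ k, q k ≠ 0 → 0 < q k := fun k h =>
      lt_of_le_of_ne (Finset.sum_nonneg fun s _ => (hb k s).1) (Ne.symm h)
    have hfeas' : DAFeasible Y W x' p' := by
      constructor
      · have : (fun k => ∑ s, p' k s) = q' := funext hsum
        rw [this]; exact hY'
      · intro k s
        by_cases h : q k = 0
        · simp only [hp', h, if_true]
          exact ⟨le_refl _, hW k s⟩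
        · simp only [hp', h, if_false]
          constructor
          · exact mul_nonneg (div_nonneg (hb' k).1 (hqpos k h).le) (hb k s).1
          · calc (q' k / q k) * p k s ≤ 1 * p k s := by
                  apply mul_le_mul_of_nonneg_right _ (hb k s).1
                  rw [div_le_one (hqpos k h)]
                  exact (hb' k).2
              _ = p k s := one_mul _
              _ ≤ W k s := (hb k s).2
    have hle := hmin x' p' hfeas'
    have hCp' : ∀ k s, C k s * p' k s ≤ C k s * p k s := by
      intro k s
      by_cases h : q k = 0
      · simp only [hp', h, if_true, mul_zero]
        exact mul_nonneg (hC k s) (hb k s).1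
      · simp only [hp', h, if_false]
        apply mul_le_mul_of_nonneg_left _ (hC k s)
        calc (q' k / q k) * p k s ≤ 1 * p k s := by
              apply mul_le_mul_of_nonneg_right _ (hb k s).1
              rw [div_le_one (hqpos k h)]
              exact (hb' k).2
          _ = p k s := one_mul _
    have hsumle : ∑ k, ∑ s, C k s * p' k s ≤ ∑ k, ∑ s, C k s * p k s :=
      Finset.sum_le_sum fun k _ => Finset.sum_le_sum fun s _ => hCp' k s
    linarith
  · rintro ⟨W', x, q, hW', ⟨⟨hY, hb⟩, hmin⟩, hv⟩
    obtain ⟨s0⟩ := ‹Nonempty S›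
    refine ⟨fun _ _ => 0, fun k s => if s = s0 then W' k else 0, x,
      fun k s => if s = s0 then q k else 0, fun _ _ => le_refl 0,
      fun k s => by dsimp only; split <;> [exact hW' k; exact le_refl 0], ⟨⟨?_, ?_⟩, ?_⟩, ?_⟩
    · have : (fun k => ∑ s, if s = s0 then q k else 0) = q := by
        funext k; simp
      rw [this]; exact hY
    · intro k s
      dsimp only
      split
      · exact ⟨(hb k).1, (hb k).2⟩
      · exact ⟨le_refl 0, le_refl 0⟩
    · intro x' p' ⟨hY', hb'⟩
      simp only [zero_mul, Finset.sum_const_zero, add_zero]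
      refine hmin x' (fun k => ∑ s, p' k s) ⟨hY', fun k => ⟨Finset.sum_nonneg fun s _ => (hb' k s).1, ?_⟩⟩
      calc ∑ s, p' k s ≤ ∑ s : S, if s = s0 then W' k else 0 :=
            Finset.sum_le_sum fun s _ => (hb' k s).2
        _ = W' k := by simp
    · have : (fun k => ∑ s, if s = s0 then q k else 0) = q := by
        funext k; simp
      rw [this]; exact hv
end

section
/- Theorem 1: S^BiD = S^BiD-q, i.e., sInf A = sInf B. Problem BiD (jointly optimizing nonnegative multi-segment bidding prices and quantities of the VRE day-ahead bidding curves so as to minimize the expected total system cost over lower-level-optimal day-ahead schedules) and Problem BiD-q (optimizing only a single nonnegative bid quantity per VRE unit–hour at zero bid price) achieve the same expected system cost. -/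
open Finset

/-- Theorem 1: S^BiD = S^BiD-q, i.e. Problem BiD (jointly optimizing nonnegative
multi-segment bidding prices and quantities) and Problem BiD-q (optimizing only a
single nonnegative bid quantity at zero price) achieve the same expected
system cost. -/
theorem BiD_cost_eq_BiDq_cost {n : ℕ} {K S : Type*} [Fintype K] [Fintype S] [Nonempty S]
    (Y : Set ((Fin n → ℝ) × (K → ℝ))) (f0 : (Fin n → ℝ) → ℝ)
    (G : (Fin n → ℝ) × (K → ℝ) → ℝ) :
    sInf {v : ℝ | ∃ (C W : K → S → ℝ) (x : Fin n → ℝ) (p : K → S → ℝ),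
        (∀ k s, 0 ≤ C k s) ∧ (∀ k s, 0 ≤ W k s) ∧ DAOptimal Y f0 C W x p ∧
        v = G (x, fun k => ∑ s, p k s)} =
    sInf {v : ℝ | ∃ (W' : K → ℝ) (x : Fin n → ℝ) (q : K → ℝ),
        (∀ k, 0 ≤ W' k) ∧ DA0Optimal Y f0 W' x q ∧ v = G (x, q)} := by
  classical
  congr 1
  ext v
  simp only [Set.mem_setOf_eq]
  constructor
  · -- A ⊆ B
    rintro ⟨C, W, x, p, hC, hW, ⟨⟨hmem, hbd⟩, hopt⟩, rfl⟩
    refine ⟨fun k => ∑ s, p k s, x, fun k => ∑ s, p k s, ?_, ⟨⟨hmem, ?_⟩, ?_⟩, rfl⟩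
    · intro k; exact Finset.sum_nonneg fun s _ => (hbd k s).1
    · intro k; exact ⟨Finset.sum_nonneg fun s _ => (hbd k s).1, le_refl _⟩
    · rintro x' q' ⟨hmem', hbd'⟩
      -- rescale q' into a DA-feasible p'
      set p' : K → S → ℝ := fun k s =>
        if (∑ t, p k t) = 0 then 0 else q' k * p k s / (∑ t, p k t) with hp'
      have hsum : ∀ k, ∑ s, p' k s = q' k := by
        intro k
        by_cases h : (∑ t, p k t) = 0
        · have h1 : q' k = 0 := le_antisymm (by simpa [h] using (hbd' k).2) (hbd' k).1
          simp [hp', h, h1]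
        · have h2 : ∑ s, p' k s = (∑ s, p k s) * (q' k / (∑ t, p k t)) := by
            simp only [hp', h, if_false]
            rw [Finset.sum_mul]
            refine Finset.sum_congr rfl fun s _ => by ring
          rw [h2, mul_div_assoc', mul_comm, mul_div_assoc, div_self h, mul_one]
      have hle : ∀ k s, p' k s ≤ p k s := by
        intro k s
        by_cases h : (∑ t, p k t) = 0
        · simp only [hp', h, if_true]; exact (hbd k s).1
        · have hpos : 0 < ∑ t, p k t :=
            lt_of_le_of_ne (Finset.sum_nonneg fun t _ => (hbd k t).1) (Ne.symm h)
          simp only [hp', h, if_false]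
          rw [div_le_iff₀ hpos]
          have := (hbd' k).2
          nlinarith [(hbd k s).1]
      have hnn : ∀ k s, 0 ≤ p' k s := by
        intro k s
        by_cases h : (∑ t, p k t) = 0
        · simp [hp', h]
        · have hpos : 0 < ∑ t, p k t :=
            lt_of_le_of_ne (Finset.sum_nonneg fun t _ => (hbd k t).1) (Ne.symm h)
          simp only [hp', h, if_false]
          exact div_nonneg (mul_nonneg (hbd' k).1 (hbd k s).1) hpos.le
      have hfeas : DAFeasible Y W x' p' := by
        refine ⟨?_, fun k s => ⟨hnn k s, (hle k s).trans (hbd k s).2⟩⟩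
        have : (fun k => ∑ s, p' k s) = q' := funext hsum
        rw [this]; exact hmem'
      have hcost : ∑ k, ∑ s, C k s * p' k s ≤ ∑ k, ∑ s, C k s * p k s :=
        Finset.sum_le_sum fun k _ => Finset.sum_le_sum fun s _ =>
          mul_le_mul_of_nonneg_left (hle k s) (hC k s)
      have := hopt x' p' hfeas
      linarith
  · -- B ⊆ A
    rintro ⟨W', x, q, hW', ⟨⟨hmem, hbd⟩, hopt⟩, rfl⟩
    obtain ⟨s₀⟩ := ‹Nonempty S›
    refine ⟨fun _ _ => 0, fun k s => if s = s₀ then W' k else 0, x,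
      fun k s => if s = s₀ then q k else 0, fun _ _ => le_refl 0,
      fun k s => by dsimp only; split <;> [exact hW' k; exact le_refl 0], ⟨⟨?_, ?_⟩, ?_⟩, ?_⟩
    · simpa using hmem
    · intro k s
      constructor
      · dsimp only; split <;> [exact (hbd k).1; exact le_refl 0]
      · dsimp only; split <;> [exact (hbd k).2; exact le_refl 0]
    · rintro x' p' ⟨hmem', hbd'⟩
      simp only [zero_mul, Finset.sum_const_zero, add_zero]
      refine hopt x' (fun k => ∑ s, p' k s) ⟨hmem', fun k => ?_⟩
      refine ⟨Finset.sum_nonneg fun s _ => (hbd' k s).1, ?_⟩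
      calc ∑ s, p' k s ≤ ∑ s, (if s = s₀ then W' k else 0) :=
            Finset.sum_le_sum fun s _ => (hbd' k s).2
        _ = W' k := by simp
    · simp
end

section
/- Corollary 1: fix a segment s₀ ∈ S and define the restricted achievable set A₀ := { G(x, fun k => Σ_{s∈S} p k s) | C : K → S → ℝ with C ≥ 0 componentwise and C k s₀ = 0 for all k ∈ K, W : K → S → ℝ with W ≥ 0 componentwise, and (x, p) optimal for DA(C,W) }. Then A₀ = A; in particular sInf A₀ = sInf A = S^BiD. That is, for multi-segment bidding curves, as long as one segment has zero bid price, the bilevel framework achieves the same expected system cost as the unrestricted Problem BiD. -/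
open Finset

/-- Corollary 1: for multi-segment bidding curves, as long as one segment `s₀` has
zero bid price, the bilevel framework achieves exactly the same achievable-cost set
(and hence the same expected system cost) as the unrestricted Problem BiD. -/
theorem zero_price_segment_suffices {n : ℕ} {K S : Type*}
    [Fintype K] [Fintype S] [Nonempty S] (s₀ : S)
    (Y : Set ((Fin n → ℝ) × (K → ℝ))) (f0 : (Fin n → ℝ) → ℝ)
    (G : (Fin n → ℝ) × (K → ℝ) → ℝ) :
    ({v : ℝ | ∃ (C W : K → S → ℝ) (x : Fin n → ℝ) (p : K → S → ℝ),
        (∀ k s, 0 ≤ C k s) ∧ (∀ k, C k s₀ = 0) ∧ (∀ k s, 0 ≤ W k s) ∧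
        DAOptimal Y f0 C W x p ∧ v = G (x, fun k => ∑ s, p k s)} =
      {v : ℝ | ∃ (C W : K → S → ℝ) (x : Fin n → ℝ) (p : K → S → ℝ),
        (∀ k s, 0 ≤ C k s) ∧ (∀ k s, 0 ≤ W k s) ∧ DAOptimal Y f0 C W x p ∧
        v = G (x, fun k => ∑ s, p k s)}) ∧
    (sInf {v : ℝ | ∃ (C W : K → S → ℝ) (x : Fin n → ℝ) (p : K → S → ℝ),
        (∀ k s, 0 ≤ C k s) ∧ (∀ k, C k s₀ = 0) ∧ (∀ k s, 0 ≤ W k s) ∧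
        DAOptimal Y f0 C W x p ∧ v = G (x, fun k => ∑ s, p k s)} =
      sInf {v : ℝ | ∃ (C W : K → S → ℝ) (x : Fin n → ℝ) (p : K → S → ℝ),
        (∀ k s, 0 ≤ C k s) ∧ (∀ k s, 0 ≤ W k s) ∧ DAOptimal Y f0 C W x p ∧
        v = G (x, fun k => ∑ s, p k s)}) := by
  classical
  have hset :
      {v : ℝ | ∃ (C W : K → S → ℝ) (x : Fin n → ℝ) (p : K → S → ℝ),
        (∀ k s, 0 ≤ C k s) ∧ (∀ k, C k s₀ = 0) ∧ (∀ k s, 0 ≤ W k s) ∧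
        DAOptimal Y f0 C W x p ∧ v = G (x, fun k => ∑ s, p k s)} =
      {v : ℝ | ∃ (C W : K → S → ℝ) (x : Fin n → ℝ) (p : K → S → ℝ),
        (∀ k s, 0 ≤ C k s) ∧ (∀ k s, 0 ≤ W k s) ∧ DAOptimal Y f0 C W x p ∧
        v = G (x, fun k => ∑ s, p k s)} := by
    apply Set.Subset.antisymm
    · rintro v ⟨C, W, x, p, hC, _, hW, hopt, hv⟩
      exact ⟨C, W, x, p, hC, hW, hopt, hv⟩
    · rintro v ⟨C, W, x, p, hC, hW, ⟨⟨hxY, hpb⟩, hmin⟩, hv⟩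
      -- new instance: all prices zero, all quantity put on segment s₀
      set t : K → ℝ := fun k => ∑ s, p k s with ht
      have ht0 : ∀ k, 0 ≤ t k := fun k =>
        Finset.sum_nonneg fun s _ => (hpb k s).1
      refine ⟨0, fun k s => if s = s₀ then t k else 0, x,
        fun k s => if s = s₀ then t k else 0, fun _ _ => le_refl 0,
        fun _ => rfl, ?_, ⟨⟨?_, ?_⟩, ?_⟩, ?_⟩
      · intro k s
        by_cases hs : s = s₀ <;> simp [hs, ht0 k]
      · have hsum : (fun k => ∑ s, if s = s₀ then t k else 0) = t := by
          funext k; simp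
        rw [hsum]; exact hxY
      · intro k s
        by_cases hs : s = s₀ <;> simp [hs, ht0 k]
      · rintro x' p' ⟨hx'Y, hp'b⟩
        simp only [Pi.zero_apply, zero_mul, Finset.sum_const_zero, add_zero]
        -- aggregate dispatch of the candidate
        set q' : K → ℝ := fun k => ∑ s, p' k s with hq'
        have hq'0 : ∀ k, 0 ≤ q' k := fun k =>
          Finset.sum_nonneg fun s _ => (hp'b k s).1
        have hq't : ∀ k, q' k ≤ t k := by
          intro k
          calc q' k = ∑ s, p' k s := rfl
            _ ≤ ∑ s, (if s = s₀ then t k else 0) :=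
                Finset.sum_le_sum fun s _ => (hp'b k s).2
            _ = t k := by simp
        -- distribute q' proportionally over segments of p
        set p'' : K → S → ℝ :=
          fun k s => if t k = 0 then 0 else (q' k / t k) * p k s with hp''
        have hratio : ∀ k, t k ≠ 0 → 0 ≤ q' k / t k ∧ q' k / t k ≤ 1 := by
          intro k hk
          have htpos : 0 < t k := lt_of_le_of_ne (ht0 k) (Ne.symm hk)
          exact ⟨div_nonneg (hq'0 k) (ht0 k), (div_le_one htpos).2 (hq't k)⟩
        have hple : ∀ k s, p'' k s ≤ p k s := by
          intro k s
          by_cases hk : t k = 0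
          · simp [hp'', hk, (hpb k s).1]
          · simp only [hp'', hk, if_false]
            calc (q' k / t k) * p k s ≤ 1 * p k s :=
                  mul_le_mul_of_nonneg_right (hratio k hk).2 (hpb k s).1
              _ = p k s := one_mul _
        have hpnn : ∀ k s, 0 ≤ p'' k s := by
          intro k s
          by_cases hk : t k = 0
          · simp [hp'', hk]
          · simp only [hp'', hk, if_false]
            exact mul_nonneg (hratio k hk).1 (hpb k s).1
        have hsum'' : ∀ k, ∑ s, p'' k s = q' k := by
          intro k
          by_cases hk : t k = 0
          · have : q' k = 0 := le_antisymm (hk ▸ hq't k) (hq'0 k)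
            simp [hp'', hk, this]
          · simp only [hp'', hk, if_false, ← Finset.mul_sum]
            have : (∑ i : S, p k i) = t k := rfl
            rw [this]
            field_simp
        have hfeas : DAFeasible Y W x' p'' := by
          constructor
          · have : (fun k => ∑ s, p'' k s) = q' := funext hsum''
            rw [this]; exact hx'Y
          · exact fun k s => ⟨hpnn k s, le_trans (hple k s) (hpb k s).2⟩
        have hkey := hmin x' p'' hfeas
        have hCle : ∑ k, ∑ s, C k s * p'' k s ≤ ∑ k, ∑ s, C k s * p k s :=
          Finset.sum_le_sum fun k _ => Finset.sum_le_sum fun s _ =>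
            mul_le_mul_of_nonneg_left (hple k s) (hC k s)
        linarith
      · have hsum : (fun k => ∑ s, if s = s₀ then t k else 0) = t := by
          funext k; simp
        rw [hv, hsum]
  exact ⟨hset, by rw [hset]⟩
end
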